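/- Let X be a completely regular Hausdorff (Tychonoff) topological space that is hereditarily Lindelöf. If X is functionally countable, then every subspace of X is exponentially separable. -/
import Mathlib


/-- A space is functionally countable if every continuous real-valued function
on it has countable range. -/
def FunctionallyCountable (X : Type*) [TopologicalSpace X] : Prop :=
  ∀ f : X → ℝ, Continuous f → (Set.range f).Countable

/-- A space `X` is exponentially separable if, for every countable family `F`
of closed subsets of `X`, there is a countable set `A ⊆ X` that is strongly
dense in `F`: `A` meets `⋂₀ G` for every subfamily `G ⊆ F` whose intersection
is nonempty. -/
def ExponentiallySeparable (X : Type*) [TopologicalSpace X] : Prop :=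
  ∀ F : Set (Set X), F.Countable → (∀ s ∈ F, IsClosed s) →
    ∃ A : Set X, A.Countable ∧ ∀ G ⊆ F, (⋂₀ G).Nonempty → (A ∩ ⋂₀ G).Nonempty

open Set

/-- In a completely regular hereditarily Lindelöf space, every closed set is a zero set
of a nonnegative continuous real-valued function. -/
lemma isZeroSet_of_closed_aux {X : Type*} [TopologicalSpace X] [CompletelyRegularSpace X]
    [HereditarilyLindelofSpace X] (C : Set X) (hC : IsClosed C) :
    ∃ g : X → ℝ, Continuous g ∧ (∀ x, 0 ≤ g x) ∧ ∀ x, (x ∈ C ↔ g x = 0) := by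
  classical
  rcases eq_empty_or_nonempty Cᶜ with hcc | hcc
  · refine ⟨fun _ => 0, continuous_const, fun x => le_refl 0, fun x => ?_⟩
    have hx : x ∈ C := by
      by_contra hx
      exact (eq_empty_iff_forall_notMem.mp hcc x) hx
    simp [hx]
  · haveI : Nonempty ↥(Cᶜ) := hcc.to_subtype
    have hsel : ∀ i : ↥(Cᶜ), ∃ f : X → unitInterval, Continuous f ∧ f ↑i = 0 ∧ Set.EqOn f 1 C :=
      fun i => CompletelyRegularSpace.completely_regular ↑i C hC (fun hmem => i.2 hmem)
    choose f hfc hf0 hf1 using hsel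
    set U : ↥(Cᶜ) → Set X := fun i => {z | (f i z : ℝ) < 1/2} with hU
    have hUo : ∀ i, IsOpen (U i) := fun i =>
      isOpen_lt (continuous_subtype_val.comp (hfc i)) continuous_const
    have hcov : Cᶜ ⊆ ⋃ i, U i := by
      intro x hx
      refine mem_iUnion.mpr ⟨⟨x, hx⟩, ?_⟩
      have : (f ⟨x, hx⟩ x : ℝ) = 0 := by rw [hf0 ⟨x, hx⟩]; rfl
      simp [hU, this]
    obtain ⟨σ, hσ⟩ := (HereditarilyLindelof_LindelofSets Cᶜ).indexed_countable_subcover U hUo hcov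
    set T : ℕ → X → ℝ := fun n x => (1/2:ℝ)^n * (1 - (f (σ n) x : ℝ)) with hT
    have hTcont : ∀ n, Continuous (T n) :=
      fun n => continuous_const.mul (continuous_const.sub
        (continuous_subtype_val.comp (hfc (σ n))))
    have hmem : ∀ n x, (f (σ n) x : ℝ) ∈ Set.Icc (0:ℝ) 1 := fun n x => (f (σ n) x).2
    have hT0 : ∀ n x, 0 ≤ T n x := by
      intro n x
      have h2 := (hmem n x).2
      have h3 : (0:ℝ) ≤ 1 - (f (σ n) x : ℝ) := by linarith
      positivity
    have hu : Summable (fun n => (1/2:ℝ)^n) :=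
      summable_geometric_of_lt_one (by norm_num) (by norm_num)
    have hTle : ∀ n x, ‖T n x‖ ≤ (1/2:ℝ)^n := by
      intro n x
      rw [Real.norm_eq_abs, abs_of_nonneg (hT0 n x)]
      have h1 := (hmem n x).1
      have hb : (1 - (f (σ n) x : ℝ)) ≤ 1 := by linarith
      have := mul_le_mul_of_nonneg_left hb (by positivity : (0:ℝ) ≤ (1/2:ℝ)^n)
      simpa [hT] using this
    refine ⟨fun x => ∑' n, T n x, continuous_tsum hTcont hu (fun n x => hTle n x),
      fun x => tsum_nonneg (fun n => hT0 n x), fun x => ?_⟩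
    constructor
    · intro hx
      have hz : ∀ n, T n x = 0 := by
        intro n
        have : f (σ n) x = 1 := hf1 (σ n) hx
        have h1 : (f (σ n) x : ℝ) = 1 := by rw [this]; rfl
        simp [hT, h1]
      calc ∑' n, T n x = ∑' _ : ℕ, (0:ℝ) := by
            exact tsum_congr hz
        _ = 0 := tsum_zero
    · intro hg
      by_contra hx
      have hxU : x ∈ ⋃ n, U (σ n) := hσ hx
      obtain ⟨n, hn⟩ := mem_iUnion.mp hxU
      have hlt : (f (σ n) x : ℝ) < 1/2 := hn
      have hsum : Summable (fun n => T n x) :=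
        Summable.of_nonneg_of_le (fun n => hT0 n x)
          (fun n => (le_abs_self _).trans (by simpa [Real.norm_eq_abs] using hTle n x)) hu
      have hpos : 0 < T n x := by
        have : (0:ℝ) < 1 - (f (σ n) x : ℝ) := by linarith
        have hp : (0:ℝ) < (1/2:ℝ)^n := by positivity
        exact mul_pos hp this
      have hlt2 := Summable.tsum_pos hsum (fun n => hT0 n x) n hpos
      have hg' : ∑' n, T n x = 0 := hg
      rw [hg'] at hlt2
      exact lt_irrefl 0 hlt2

/-- For any countable set of reals and any `k`, there is a real in `(0, 1/(k+1))`
avoiding the countable set. -/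
lemma exists_pos_small_notMem_aux (R : Set ℝ) (hR : R.Countable) (k : ℕ) :
    ∃ a : ℝ, 0 < a ∧ a < 1/((k:ℝ)+1) ∧ a ∉ R := by
  by_contra h
  push_neg at h
  have hsub : Set.Ioo (0:ℝ) (1/((k:ℝ)+1)) ⊆ R := fun a ha => h a ha.1 ha.2
  have hcnt : (Set.Ioo (0:ℝ) (1/((k:ℝ)+1))).Countable := hR.mono hsub
  have hlt : (0:ℝ) < 1/((k:ℝ)+1) := by positivity
  have h1 := hcnt.le_aleph0
  rw [Cardinal.mk_Ioo_real hlt] at h1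
  exact (Cardinal.aleph0_lt_continuum.not_ge) h1

/-- If `X` is Tychonoff (completely regular Hausdorff),
hereditarily Lindelöf and functionally countable, then every subspace of `X`
is exponentially separable. -/
theorem subspaces_exponentiallySeparable_of_hereditarilyLindelof
    {X : Type*} [TopologicalSpace X] [T2Space X] [CompletelyRegularSpace X]
    [HereditarilyLindelofSpace X]
    (hfc : FunctionallyCountable X) (Y : Set X) :
    ExponentiallySeparable ↥Y := by
  classical
  intro F hFc hFcl
  by_cases hY : Nonempty ↥Y
  swap
  · refine ⟨∅, countable_empty, fun G _ hne => absurd ⟨hne.some⟩ hY⟩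
  · -- enrich the family so that it is nonempty
    set F' : Set (Set ↥Y) := insert Set.univ F with hF'
    have hF'c : F'.Countable := hFc.insert _
    have hF'cl : ∀ s ∈ F', IsClosed s := by
      intro s hs
      rcases hs with rfl | hs
      · exact isClosed_univ
      · exact hFcl s hs
    obtain ⟨e, he⟩ := hF'c.exists_eq_range (insert_nonempty _ _)
    -- represent each member of the family as the trace of a closed set of `X`
    have hDex : ∀ n, ∃ D : Set X, IsClosed D ∧ Subtype.val ⁻¹' D = e n := by
      intro n
      have hmemF' : e n ∈ F' := by rw [he]; exact mem_range_self n
      exact isClosed_induced_iff.mp (hF'cl _ hmemF')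
    choose D hDcl hDpre using hDex
    -- each closed set is a zero set of a continuous function with countable range
    choose g hgc hgnn hgz using fun n => isZeroSet_of_closed_aux (D n) (hDcl n)
    have hRc : ∀ n, (Set.range (g n)).Countable := fun n => hfc _ (hgc n)
    -- choose thresholds avoiding the (countable) ranges
    choose a ha1 ha2 ha3 using fun p : ℕ × ℕ => exists_pos_small_notMem_aux _ (hRc p.1) p.2
    set N : ℕ → ℕ × ℕ := fun m => Nat.pairEquiv.symm m with hN
    -- the bit pattern of a point
    set β : X → ℕ → Bool := fun x m => decide (g (N m).1 x < a (N m)) with hβ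
    -- key: the bit pattern determines which `g n` vanish
    have hkey : ∀ (x : X) (n : ℕ), g n x = 0 ↔ ∀ k : ℕ, g n x < a (n, k) := by
      intro x n
      constructor
      · intro h0 k
        rw [h0]
        exact ha1 (n, k)
      · intro hk
        by_contra hne
        have hpos : 0 < g n x := lt_of_le_of_ne (hgnn n x) (Ne.symm hne)
        obtain ⟨k, hklt⟩ := exists_nat_one_div_lt hpos
        exact absurd ((hk k).trans (ha2 (n, k))) (not_lt.mpr hklt.le)
    have hbit : ∀ (x : X) (n k : ℕ), β x (Nat.pairEquiv (n, k)) = decide (g n x < a (n, k)) := by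
      intro x n k
      simp only [hβ, hN, Equiv.symm_apply_apply]
    -- the coding function
    set h : X → ℝ := fun x => Cardinal.cantorFunction (1/3) (β x) with hh
    have hcont : Continuous h := by
      rw [hh]
      unfold Cardinal.cantorFunction
      refine continuous_tsum (u := fun m => (1/3:ℝ)^m) ?_
        (summable_geometric_of_lt_one (by norm_num) (by norm_num)) ?_
      · intro m
        have heq : (fun x => Cardinal.cantorFunctionAux (1/3) (β x) m) =
            fun x => if g (N m).1 x < a (N m) then (1/3:ℝ)^m else 0 := by
          funext x
          simp [Cardinal.cantorFunctionAux, hβ, Bool.cond_decide]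
        rw [heq]
        refine Continuous.if ?_ continuous_const continuous_const
        intro x hx
        exfalso
        have hfr := frontier_lt_subset_eq (hgc (N m).1) continuous_const hx
        exact (ha3 (N m)) ⟨x, hfr⟩
      · intro m x
        cases hb : β x m
        · rw [Cardinal.cantorFunctionAux_false hb]
          simpa using (by positivity : (0:ℝ) ≤ (1/3)^m)
        · rw [Cardinal.cantorFunctionAux_true hb, Real.norm_eq_abs,
            abs_of_nonneg (by positivity)]
    -- the range of the bit-pattern map is countable
    have hinj : Function.Injective (Cardinal.cantorFunction (1/3:ℝ)) :=
      Cardinal.cantorFunction_injective (by norm_num) (by norm_num)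
    have hpre : Set.range β ⊆ Cardinal.cantorFunction (1/3) ⁻¹' (Set.range h) := by
      rintro b ⟨x, rfl⟩
      exact ⟨x, rfl⟩
    have hβc : (Set.range β).Countable := (((hfc h hcont).preimage hinj).mono hpre)
    -- choose representatives in `Y` for each bit pattern realized in `Y`
    have hsel : ∀ b : ℕ → Bool, (∃ y : ↥Y, β ↑y = b) → ∃ y : ↥Y, β ↑y = b := fun _ hb => hb
    set pick : (ℕ → Bool) → ↥Y := fun b =>
      if hb : ∃ y : ↥Y, β ↑y = b then hb.choose else Classical.arbitrary _ with hpick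
    set A : Set ↥Y := pick '' (Set.range (fun y : ↥Y => β ↑y)) with hA
    have hAc : A.Countable := by
      refine Set.Countable.image ?_ _
      exact hβc.mono (by rintro b ⟨y, rfl⟩; exact ⟨↑y, rfl⟩)
    refine ⟨A, hAc, ?_⟩
    intro G hGF hne
    obtain ⟨y, hy⟩ := hne
    have hbA : pick (β ↑y) ∈ A := mem_image_of_mem _ ⟨y, rfl⟩
    set a0 : ↥Y := pick (β ↑y) with ha0
    have hba : β ↑a0 = β ↑y := by
      have hex : ∃ z : ↥Y, β ↑z = β ↑y := ⟨y, rfl⟩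
      rw [ha0, hpick]
      simp only [hex, dif_pos]
      exact hex.choose_spec
    refine ⟨a0, hbA, ?_⟩
    intro s hsG
    have hsF' : s ∈ F' := mem_insert_of_mem _ (hGF hsG)
    obtain ⟨n, hn⟩ : ∃ n, e n = s := by
      rw [he] at hsF'
      exact hsF'
    have hyD : g n ↑y = 0 := by
      have hys : y ∈ e n := hn ▸ hy s hsG
      have : (↑y : X) ∈ D n := by
        rw [← hDpre n] at hys
        exact hys
      exact (hgz n ↑y).mp this
    have haD : g n ↑a0 = 0 := by
      rw [hkey]
      intro k
      have hbity : g n (↑y : X) < a (n, k) := by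
        have := (hkey (↑y) n).mp hyD k
        exact this
      have hb1 : β ↑a0 (Nat.pairEquiv (n, k)) = β ↑y (Nat.pairEquiv (n, k)) := by rw [hba]
      rw [hbit, hbit] at hb1
      have : decide (g n (↑a0 : X) < a (n, k)) = true := by
        rw [hb1]
        simpa using hbity
      simpa using this
    have : (↑a0 : X) ∈ D n := (hgz n ↑a0).mpr haD
    have : a0 ∈ e n := by
      rw [← hDpre n]
      exact this
    rw [hn] at this
    exact this
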